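/- Let G be a spider graph with p ≥ 1 paths attached to the center in which every attached path has an even number of vertices, and let N_e be the number of vertices of G at even positive level. Then there exists a labeling of G with differential value at least N_e; consequently the differential chromatic number of G equals N_e. -/
import Mathlib


/-- A labeling of the vertices of a finite graph on `n` vertices: a one-to-one
assignment of the numbers `1, …, n` to the vertices. -/
def IsLabeling {V : Type*} [Fintype V] (c : V → ℕ) : Prop :=
  Function.Injective c ∧ ∀ v, c v ∈ Finset.Icc 1 (Fintype.card V)

/-- The differential value of the labeling `c` is at least `d`: every edge has
label difference at least `d`. -/
def DiffValAtLeast {V : Type*} (G : SimpleGraph V) (c : V → ℕ) (d : ℕ) : Prop :=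
  ∀ u v, G.Adj u v → d ≤ Nat.dist (c u) (c v)

/-- The differential chromatic number: the maximum, over all labelings, of the
minimum label difference over the edges. -/
noncomputable def diffChromNum {V : Type*} [Fintype V] (G : SimpleGraph V) : ℕ :=
  sSup {d : ℕ | ∃ c : V → ℕ, IsLabeling c ∧ DiffValAtLeast G c d}

/-- The spider graph with center `none` and `p` attached paths, the `i`-th path
having `ℓ i` vertices `some ⟨i, j⟩` (the vertex `some ⟨i, j⟩` is at level `j + 1`,
i.e. at distance `j + 1` from the center). -/
def spider (p : ℕ) (ℓ : Fin p → ℕ) : SimpleGraph (Option (Σ i : Fin p, Fin (ℓ i))) :=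
  SimpleGraph.fromRel (fun a b =>
    (a = none ∧ ∃ (i : Fin p) (h : 0 < ℓ i), b = some ⟨i, ⟨0, h⟩⟩) ∨
    (∃ (i : Fin p) (x y : Fin (ℓ i)), (x : ℕ) + 1 = (y : ℕ) ∧
      a = some ⟨i, x⟩ ∧ b = some ⟨i, y⟩))

/-- The number of vertices of the spider at even positive level (the vertex
`some ⟨i, j⟩` is at level `j + 1`). -/
def spiderNe (p : ℕ) (ℓ : Fin p → ℕ) : ℕ :=
  (Finset.univ.filter (fun v : Σ i : Fin p, Fin (ℓ i) => (v.2 : ℕ) % 2 = 1)).card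

/-- The number of vertices of the spider at odd level. -/
def spiderNo (p : ℕ) (ℓ : Fin p → ℕ) : ℕ :=
  (Finset.univ.filter (fun v : Σ i : Fin p, Fin (ℓ i) => (v.2 : ℕ) % 2 = 0)).card

namespace SpiderAux

theorem aux_odd_range (n : ℕ) :
    ((Finset.range n).filter (fun j => j % 2 = 1)).card = n / 2 := by
  induction n with
  | zero => simp
  | succ n ih =>
    rw [Finset.range_add_one, Finset.filter_insert]
    by_cases h : n % 2 = 1
    · rw [if_pos h, Finset.card_insert_of_notMem (by simp)]; omega
    · rw [if_neg h]; omega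

theorem aux_odd_fin (n : ℕ) :
    (Finset.univ.filter (fun j : Fin n => (j : ℕ) % 2 = 1)).card = n / 2 := by
  rw [Finset.card_filter]
  rw [Fin.sum_univ_eq_sum_range (fun j => if j % 2 = 1 then 1 else 0) n]
  rw [← Finset.card_filter, aux_odd_range]

variable (p : ℕ) (ℓ : Fin p → ℕ)

def auxNe : ℕ := ∑ i, ℓ i / 2
def auxS (i : Fin p) : ℕ := ∑ i' ∈ Finset.Iio i, ℓ i' / 2

def auxC : Option (Σ i : Fin p, Fin (ℓ i)) → ℕ
  | none => 2 * auxNe p ℓ + 1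
  | some ⟨i, j⟩ => (j : ℕ) % 2 * auxNe p ℓ + auxS p ℓ i + (ℓ i / 2 - (j : ℕ) / 2)

variable {p ℓ}

theorem spiderNe_eq : spiderNe p ℓ = auxNe p ℓ := by
  unfold spiderNe auxNe
  have : (Finset.univ.filter (fun v : Σ i : Fin p, Fin (ℓ i) => (v.2 : ℕ) % 2 = 1))
      = Finset.univ.sigma
          (fun i => Finset.univ.filter (fun j : Fin (ℓ i) => (j : ℕ) % 2 = 1)) := by
    ext ⟨i, j⟩; simp
  rw [this, Finset.card_sigma]
  exact Finset.sum_congr rfl fun i _ => aux_odd_fin (ℓ i)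

theorem auxS_add_le (i : Fin p) : auxS p ℓ i + ℓ i / 2 ≤ auxNe p ℓ := by
  have h1 : auxS p ℓ i + ℓ i / 2 = ∑ i' ∈ Finset.Iic i, ℓ i' / 2 := by
    rw [← Finset.Iio_insert, Finset.sum_insert (by simp), auxS]; ring
  rw [h1, auxNe]
  exact Finset.sum_le_sum_of_subset (Finset.subset_univ _)

theorem auxS_lt_le {i i' : Fin p} (h : i < i') :
    auxS p ℓ i + ℓ i / 2 ≤ auxS p ℓ i' := by
  have h1 : auxS p ℓ i + ℓ i / 2 = ∑ i'' ∈ Finset.Iic i, ℓ i'' / 2 := by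
    rw [← Finset.Iio_insert, Finset.sum_insert (by simp), auxS]; ring
  rw [h1, auxS]
  exact Finset.sum_le_sum_of_subset (by intro x hx; simp at *; omega)

theorem div2_lt (heven : ∀ i, Even (ℓ i)) (i : Fin p) (j : Fin (ℓ i)) :
    (j : ℕ) / 2 < ℓ i / 2 := by
  obtain ⟨t, ht⟩ := heven i
  have := j.isLt
  omega

theorem card_eq (heven : ∀ i, Even (ℓ i)) :
    Fintype.card (Option (Σ i : Fin p, Fin (ℓ i))) = 2 * auxNe p ℓ + 1 := by
  have h : ∑ i, ℓ i = 2 * auxNe p ℓ := by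
    rw [auxNe, Finset.mul_sum]
    refine Finset.sum_congr rfl fun i _ => ?_
    obtain ⟨t, ht⟩ := heven i; omega
  simp [Fintype.card_option, Fintype.card_sigma, h]

theorem auxC_inj (heven : ∀ i, Even (ℓ i)) : Function.Injective (auxC p ℓ) := by
  have key : ∀ (i : Fin p) (j : Fin (ℓ i)),
      1 ≤ auxS p ℓ i + (ℓ i / 2 - (j : ℕ) / 2) ∧
      auxS p ℓ i + (ℓ i / 2 - (j : ℕ) / 2) ≤ auxNe p ℓ := by
    intro i j
    have h1 := div2_lt heven i j
    have h2 := auxS_add_le (ℓ := ℓ) i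
    omega
  intro a b hab
  match a, b with
  | none, none => rfl
  | none, some ⟨i, j⟩ =>
    exfalso
    simp only [auxC] at hab
    have := key i j
    have hm : (j : ℕ) % 2 ≤ 1 := by omega
    nlinarith [hab, this.1, this.2]
  | some ⟨i, j⟩, none =>
    exfalso
    simp only [auxC] at hab
    have := key i j
    have hm : (j : ℕ) % 2 ≤ 1 := by omega
    nlinarith [hab, this.1, this.2]
  | some ⟨i, j⟩, some ⟨i', j'⟩ =>
    simp only [auxC] at hab
    have k1 := key i j
    have k2 := key i' j'
    -- parities are equal
    have hpar : (j : ℕ) % 2 = (j' : ℕ) % 2 := by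
      rcases Nat.lt_trichotomy ((j : ℕ) % 2) ((j' : ℕ) % 2) with h | h | h
      · exfalso
        have : (j : ℕ) % 2 = 0 ∧ (j' : ℕ) % 2 = 1 := by omega
        rw [this.1, this.2] at hab; omega
      · exact h
      · exfalso
        have : (j' : ℕ) % 2 = 0 ∧ (j : ℕ) % 2 = 1 := by omega
        rw [this.1, this.2] at hab; omega
    have hval : auxS p ℓ i + (ℓ i / 2 - (j : ℕ) / 2)
        = auxS p ℓ i' + (ℓ i' / 2 - (j' : ℕ) / 2) := by
      rw [hpar] at hab; omega
    have hii : i = i' := by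
      rcases Nat.lt_trichotomy i i' with h | h | h
      · exfalso
        have h3 := auxS_lt_le (ℓ := ℓ) h
        have h4 := div2_lt heven i j
        have h5 := div2_lt heven i' j'
        omega
      · exact Fin.ext h
      · exfalso
        have h3 := auxS_lt_le (ℓ := ℓ) h
        have h4 := div2_lt heven i j
        have h5 := div2_lt heven i' j'
        omega
    subst hii
    have h4 := div2_lt heven i j
    have h5 := div2_lt heven i j'
    have : j = j' := by
      apply Fin.ext; omega
    rw [this]

theorem auxC_lab (heven : ∀ i, Even (ℓ i)) : IsLabeling (auxC p ℓ) := by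
  refine ⟨auxC_inj heven, fun v => ?_⟩
  rw [card_eq heven, Finset.mem_Icc]
  match v with
  | none => simp [auxC]
  | some ⟨i, j⟩ =>
    simp only [auxC]
    have h1 := div2_lt heven i j
    have h2 := auxS_add_le (ℓ := ℓ) i
    have hm : (j : ℕ) % 2 ≤ 1 := by omega
    rcases Nat.mod_two_eq_zero_or_one (j : ℕ) with hx | hx <;> rw [hx] <;> omega

theorem auxC_diff (heven : ∀ i, Even (ℓ i)) :
    DiffValAtLeast (spider p ℓ) (auxC p ℓ) (auxNe p ℓ) := by
  have key : ∀ a b, ((a = none ∧ ∃ (i : Fin p) (h : 0 < ℓ i), b = some ⟨i, ⟨0, h⟩⟩) ∨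
      (∃ (i : Fin p) (x y : Fin (ℓ i)), (x : ℕ) + 1 = (y : ℕ) ∧
        a = some ⟨i, x⟩ ∧ b = some ⟨i, y⟩)) →
      auxNe p ℓ ≤ Nat.dist (auxC p ℓ a) (auxC p ℓ b) := by
    rintro a b (⟨rfl, i, h, rfl⟩ | ⟨i, x, y, hxy, rfl, rfl⟩)
    · simp only [auxC, Nat.dist]
      have h2 := auxS_add_le (ℓ := ℓ) i
      simp only [Fin.val_mk, Nat.zero_mod, Nat.zero_div]
      omega
    · simp only [auxC, Nat.dist]
      have h2 := auxS_add_le (ℓ := ℓ) i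
      have h3 := div2_lt heven i x
      have h4 := div2_lt heven i y
      rcases Nat.mod_two_eq_zero_or_one (x : ℕ) with hx | hx
      · have hy : (y : ℕ) % 2 = 1 := by omega
        rw [hx, hy]; omega
      · have hy : (y : ℕ) % 2 = 0 := by omega
        rw [hx, hy]; omega
  intro u v huv
  rw [spider, SimpleGraph.fromRel_adj] at huv
  rcases huv.2 with h | h
  · exact key u v h
  · rw [Nat.dist_comm]; exact key v u h

end SpiderAux

/-- A spider graph with `p ≥ 1` attached paths, each having an even number of
vertices, admits a labeling of differential value at least `N_e`, and its
differential chromatic number equals `N_e`. -/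


theorem stmt_8 (p : ℕ) (hp : 1 ≤ p) (ℓ : Fin p → ℕ) (hℓ : ∀ i, 1 ≤ ℓ i)
    (heven : ∀ i, Even (ℓ i)) :
    (∃ c : Option (Σ i : Fin p, Fin (ℓ i)) → ℕ, IsLabeling c ∧
      DiffValAtLeast (spider p ℓ) c (spiderNe p ℓ)) ∧
    diffChromNum (spider p ℓ) = spiderNe p ℓ := by
  open SpiderAux in
  rw [spiderNe_eq]
  set Ne := SpiderAux.auxNe p ℓ with hNedef
  have hpart1 : ∃ c : Option (Σ i : Fin p, Fin (ℓ i)) → ℕ, IsLabeling c ∧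
      DiffValAtLeast (spider p ℓ) c Ne :=
    ⟨SpiderAux.auxC p ℓ, SpiderAux.auxC_lab heven, SpiderAux.auxC_diff heven⟩
  refine ⟨hpart1, ?_⟩
  -- upper bound: every achievable d is ≤ Ne
  have hub : ∀ d ∈ {d : ℕ | ∃ c : Option (Σ i : Fin p, Fin (ℓ i)) → ℕ,
      IsLabeling c ∧ DiffValAtLeast (spider p ℓ) c d}, d ≤ Ne := by
    rintro d ⟨c, ⟨hinj, hmem⟩, hd⟩
    have hcard : Fintype.card (Option (Σ i : Fin p, Fin (ℓ i))) = 2 * Ne + 1 :=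
      SpiderAux.card_eq heven
    -- find the vertex labeled Ne + 1
    have hsurj : ∃ v, c v = Ne + 1 := by
      set n := Fintype.card (Option (Σ i : Fin p, Fin (ℓ i))) with hn
      let e : (Option (Σ i : Fin p, Fin (ℓ i))) → (Finset.Icc 1 n : Finset ℕ) :=
        fun v => ⟨c v, hmem v⟩
      have heinj : Function.Injective e := by
        intro a b hab
        apply hinj
        exact congrArg Subtype.val hab
      have hcards : Fintype.card (Option (Σ i : Fin p, Fin (ℓ i)))
          = Fintype.card (Finset.Icc 1 n : Finset ℕ) := by
        rw [Fintype.card_coe, Nat.card_Icc]; omega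
      have hbij := (Fintype.bijective_iff_injective_and_card e).2 ⟨heinj, hcards⟩
      obtain ⟨v, hv⟩ := hbij.2 ⟨Ne + 1, by rw [Finset.mem_Icc]; omega⟩
      exact ⟨v, congrArg Subtype.val hv⟩
    obtain ⟨v, hv⟩ := hsurj
    -- v has a neighbor
    have hnbr : ∃ u, (spider p ℓ).Adj u v := by
      match v with
      | none =>
        refine ⟨some ⟨⟨0, hp⟩, ⟨0, hℓ _⟩⟩, ?_⟩
        rw [spider, SimpleGraph.fromRel_adj]
        exact ⟨by simp, Or.inr (Or.inl ⟨rfl, ⟨0, hp⟩, hℓ _, rfl⟩)⟩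
      | some ⟨i, j⟩ =>
        by_cases hj : (j : ℕ) = 0
        · refine ⟨none, ?_⟩
          rw [spider, SimpleGraph.fromRel_adj]
          refine ⟨by simp, Or.inl (Or.inl ⟨rfl, i, hℓ i, ?_⟩)⟩
          have hj' : j = ⟨0, hℓ i⟩ := Fin.ext hj
          rw [hj']
        · refine ⟨some ⟨i, ⟨(j : ℕ) - 1, by omega⟩⟩, ?_⟩
          rw [spider, SimpleGraph.fromRel_adj]
          constructor
          · intro h
            have := congrArg (fun x => Option.map (fun s : Σ i : Fin p, Fin (ℓ i) => (s.2 : ℕ)) x) h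
            simp at this
            omega
          · exact Or.inl (Or.inr ⟨i, ⟨(j : ℕ) - 1, by omega⟩, j, by simp; omega, rfl, rfl⟩)
    obtain ⟨u, hadj⟩ := hnbr
    have h1 := hd u v hadj
    have h2 := hmem u
    rw [hcard, Finset.mem_Icc] at h2
    rw [hv] at h1
    simp only [Nat.dist] at h1
    omega
  have hmemS : Ne ∈ {d : ℕ | ∃ c : Option (Σ i : Fin p, Fin (ℓ i)) → ℕ,
      IsLabeling c ∧ DiffValAtLeast (spider p ℓ) c d} := hpart1
  exact le_antisymm (csSup_le ⟨Ne, hmemS⟩ hub) (le_csSup ⟨Ne, hub⟩ hmemS)
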